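/- Let x, y be distinct real numbers and A : ℂ → ℂ an entire function such that |exp(A(z))| = 1 for all z ∈ ℝ + i{x, y} (i.e., for all z with imaginary part equal to x or to y). Then A is periodic with period 2i(x − y), i.e., A(z) = A(z + 2i(x − y)) for all z ∈ ℂ. -/

import Mathlib

open Complex Filter Set Topology

local notation "conj'" => starRingEnd ℂ

lemma conj_comp_differentiable {A : ℂ → ℂ} (hA : Differentiable ℂ A) (c : ℂ) :
    Differentiable ℂ (fun w : ℂ => conj' (A (conj' w + c))) := by
  intro z
  set a := deriv A (conj' z + c) with ha
  have hd : HasDerivAt A a (conj' z + c) := (hA _).hasDerivAt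
  have h1 : HasFDerivAt (fun w : ℂ => conj' w + c)
      (Complex.conjCLE.toContinuousLinearMap : ℂ →L[ℝ] ℂ) z :=
    Complex.conjCLE.toContinuousLinearMap.hasFDerivAt.add_const c
  have h2 : HasFDerivAt A
      (((1 : ℂ →L[ℂ] ℂ).smulRight a).restrictScalars ℝ) (conj' z + c) :=
    hd.hasFDerivAt.restrictScalars ℝ
  have h3 : HasFDerivAt (fun w : ℂ => conj' (A (conj' w + c)))
      ((Complex.conjCLE.toContinuousLinearMap : ℂ →L[ℝ] ℂ).comp
        ((((1 : ℂ →L[ℂ] ℂ).smulRight a).restrictScalars ℝ).comp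
          (Complex.conjCLE.toContinuousLinearMap : ℂ →L[ℝ] ℂ))) z :=
    (Complex.conjCLE.toContinuousLinearMap.hasFDerivAt).comp z ((h2.comp z h1))
  have h4 : HasFDerivAt (fun w : ℂ => conj' (A (conj' w + c)))
      ((1 : ℂ →L[ℂ] ℂ).smulRight (conj' a)) z := by
    apply hasFDerivAt_of_restrictScalars ℝ h3
    ext w
    simp [mul_comm]
  exact h4.differentiableAt

lemma reflect {A : ℂ → ℂ} (hA : Differentiable ℂ A) (c : ℝ)
    (hRe : ∀ z : ℂ, z.im = c → (A z).re = 0) :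
    ∀ z : ℂ, A z = -conj' (A (conj' z + 2 * c * I)) := by
  set g := fun w : ℂ => -conj' (A (conj' w + 2 * c * I)) with hg_def
  have hg : Differentiable ℂ g := (conj_comp_differentiable hA _).neg
  have hAa : AnalyticOnNhd ℂ A univ := analyticOnNhd_univ_iff_differentiable.2 hA
  have hga : AnalyticOnNhd ℂ g univ := analyticOnNhd_univ_iff_differentiable.2 hg
  -- points on the line im = c
  have key : ∀ z : ℂ, z.im = c → A z = g z := by
    intro z hz
    have h1 : conj' z + 2 * c * I = z := by
      apply Complex.ext <;> simp [hz] <;> ring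
    have h2 : (A z).re = 0 := hRe z hz
    simp only [hg_def, h1]
    apply Complex.ext <;> simp [h2]
  -- sequence tending to c*I within {c*I}ᶜ
  set u : ℕ → ℂ := fun n => (1 / (n + 1) : ℝ) + (c : ℂ) * I with hu_def
  have hu_im : ∀ n, (u n).im = c := by intro n; simp [hu_def]
  have hu_ne : ∀ n, u n ≠ (c : ℂ) * I := by
    intro n h
    have h2 : (u n).re = 0 := by rw [h]; simp
    have h3 : (u n).re = 1 / ((n : ℝ) + 1) := by
      simp only [hu_def, Complex.add_re, Complex.ofReal_re, Complex.mul_re,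
        Complex.ofReal_im, Complex.I_re, Complex.I_im]
      ring
    rw [h3] at h2
    have h4 : (0 : ℝ) < 1 / ((n : ℝ) + 1) := by positivity
    linarith
  have hu_tendsto : Tendsto u atTop (𝓝[≠] ((c : ℂ) * I)) := by
    rw [tendsto_nhdsWithin_iff]
    constructor
    · have h0 : Tendsto (fun n : ℕ => (1 / (n + 1) : ℝ)) atTop (𝓝 0) :=
        tendsto_one_div_add_atTop_nhds_zero_nat
      have h1 := (Complex.continuous_ofReal.tendsto 0).comp h0
      have h2 := h1.add_const ((c : ℂ) * I)
      simpa [hu_def, Function.comp_def] using h2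
    · exact Eventually.of_forall fun n => hu_ne n
  have hfreq : ∃ᶠ z in 𝓝[≠] ((c : ℂ) * I), A z = g z :=
    hu_tendsto.frequently (Frequently.of_forall fun n => key (u n) (hu_im n))
  have := hAa.eq_of_frequently_eq hga hfreq
  intro z
  exact congrFun this z

theorem exp_modulus_one_on_two_lines_periodic (x y : ℝ) (hxy : x ≠ y)
    (A : ℂ → ℂ) (hA : Differentiable ℂ A)
    (h : ∀ z : ℂ, (z.im = x ∨ z.im = y) → ‖Complex.exp (A z)‖ = 1) :
    ∀ z : ℂ, A z = A (z + 2 * Complex.I * ((x : ℂ) - (y : ℂ))) := by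
  have hRe : ∀ z : ℂ, (z.im = x ∨ z.im = y) → (A z).re = 0 := by
    intro z hz
    have := h z hz
    rw [Complex.norm_exp] at this
    rw [← Real.exp_zero] at this
    exact Real.exp_injective this
  have hx := reflect hA x (fun z hz => hRe z (Or.inl hz))
  have hy := reflect hA y (fun z hz => hRe z (Or.inr hz))
  intro z
  have e1 : conj' (z + 2 * Complex.I * ((x : ℂ) - (y : ℂ))) + 2 * x * I
      = conj' z + 2 * y * I := by
    rw [map_add, map_mul, map_mul, map_sub]
    simp only [Complex.conj_I, Complex.conj_ofReal, map_ofNat]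
    ring
  have e2 := hx (z + 2 * Complex.I * ((x : ℂ) - (y : ℂ)))
  rw [e1] at e2
  rw [e2, ← hy z]
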